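/- Suppose Z = [X; Y] ∈ ℝ^{(n₁+n₂)×r} is aligned with Z⋆, i.e., the identity matrix I_r is a minimizer of ‖XP − X⋆‖_F² + ‖YP⁻ᵀ − Y⋆‖_F² over invertible P ∈ ℝ^{r×r}. Then ⟨X − X⋆, (XYᵀ − M⋆)Y⟩ ≥ ‖Y(X − X⋆)ᵀ‖_F² − ¼‖X − X⋆‖_F⁴, and similarly ⟨Y − Y⋆, (XYᵀ − M⋆)ᵀX⟩ ≥ ‖X(Y − Y⋆)ᵀ‖_F² − ¼‖Y − Y⋆‖_F⁴. -/

import Mathlib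

open Matrix BigOperators

/-- Frobenius norm of a real matrix. -/
noncomputable def frobNorm {m n : ℕ} (A : Matrix (Fin m) (Fin n) ℝ) : ℝ :=
  Real.sqrt (∑ i, ∑ j, (A i j) ^ 2)

/-- Spectral norm (largest singular value) of a real matrix. -/
noncomputable def specNorm {m n : ℕ} (A : Matrix (Fin m) (Fin n) ℝ) : ℝ :=
  ‖LinearMap.toContinuousLinearMap (Matrix.toEuclideanLin A)‖

/-- Smallest singular value of a matrix with `r` columns (the `r`-th largest singular value). -/
noncomputable def sigmaMinCol {m r : ℕ} (A : Matrix (Fin m) (Fin r) ℝ) : ℝ :=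
  sInf { s | ∃ v : EuclideanSpace ℝ (Fin r), ‖v‖ = 1 ∧ s = ‖Matrix.toEuclideanLin A v‖ }

/-- Matrix inner product `⟨A, B⟩ = Tr(Bᵀ A)`. -/
noncomputable def matInner {m n : ℕ} (A B : Matrix (Fin m) (Fin n) ℝ) : ℝ :=
  Matrix.trace (Bᵀ * A)

/-- Euclidean norm on `ℝ^m`. -/
noncomputable def vec2Norm {m : ℕ} (y : Fin m → ℝ) : ℝ :=
  Real.sqrt (∑ i, (y i) ^ 2)

/-- The sensing operator `𝒜(M) = (⟨A_i, M⟩)_{i=1..m}`. -/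
noncomputable def senseOp {n₁ n₂ m : ℕ} (As : Fin m → Matrix (Fin n₁) (Fin n₂) ℝ)
    (M : Matrix (Fin n₁) (Fin n₂) ℝ) : Fin m → ℝ :=
  fun i => matInner (As i) M

/-- The adjoint operator `𝒜*(y) = ∑ i, y i • A i`. -/
noncomputable def senseAdj {n₁ n₂ m : ℕ} (As : Fin m → Matrix (Fin n₁) (Fin n₂) ℝ)
    (y : Fin m → ℝ) : Matrix (Fin n₁) (Fin n₂) ℝ :=
  ∑ i, y i • As i

/-- Rank-`k` restricted isometry property with constant `δ`. -/
def HasRIP {n₁ n₂ m : ℕ} (As : Fin m → Matrix (Fin n₁) (Fin n₂) ℝ) (k : ℕ) (δ : ℝ) : Prop :=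
  0 ≤ δ ∧ δ < 1 ∧
  ∀ M : Matrix (Fin n₁) (Fin n₂) ℝ, M.rank ≤ k →
    (1 - δ) * (frobNorm M) ^ 2 ≤ (vec2Norm (senseOp As M)) ^ 2 ∧
    (vec2Norm (senseOp As M)) ^ 2 ≤ (1 + δ) * (frobNorm M) ^ 2

/-- dist(Z, Z⋆): infimum over invertible `P` of
`sqrt(‖XP − X⋆‖_F² + ‖YP⁻ᵀ − Y⋆‖_F²)`. -/
noncomputable def distZ {n₁ n₂ r : ℕ} (X Xs : Matrix (Fin n₁) (Fin r) ℝ)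
    (Y Ys : Matrix (Fin n₂) (Fin r) ℝ) : ℝ :=
  sInf { v | ∃ P : Matrix (Fin r) (Fin r) ℝ, IsUnit P ∧
    v = Real.sqrt ((frobNorm (X * P - Xs)) ^ 2 + (frobNorm (Y * (P⁻¹)ᵀ - Ys)) ^ 2) }

namespace GD

noncomputable def ip {m n : ℕ} (A B : Matrix (Fin m) (Fin n) ℝ) : ℝ :=
  ∑ i, ∑ j, A i j * B i j

variable {m n p r : ℕ}

lemma ip_comm (A B : Matrix (Fin m) (Fin n) ℝ) : ip A B = ip B A := by
  simp [ip, mul_comm]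

lemma frobNorm_eq (A : Matrix (Fin m) (Fin n) ℝ) : frobNorm A = Real.sqrt (ip A A) := by
  simp [frobNorm, ip, pow_two]

lemma ip_self_nonneg (A : Matrix (Fin m) (Fin n) ℝ) : 0 ≤ ip A A := by
  apply Finset.sum_nonneg; intro i _; apply Finset.sum_nonneg; intro j _; exact mul_self_nonneg _

lemma frob_sq (A : Matrix (Fin m) (Fin n) ℝ) : frobNorm A ^ 2 = ip A A := by
  rw [frobNorm_eq, Real.sq_sqrt (ip_self_nonneg A)]

lemma frob_nonneg (A : Matrix (Fin m) (Fin n) ℝ) : 0 ≤ frobNorm A := by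
  rw [frobNorm_eq]; exact Real.sqrt_nonneg _

lemma ip_self_eq_zero {A : Matrix (Fin m) (Fin n) ℝ} (h : ip A A = 0) : A = 0 := by
  ext i j
  have h1 : ∀ i ∈ (Finset.univ : Finset (Fin m)), (0:ℝ) ≤ ∑ j, A i j * A i j :=
    fun i _ => Finset.sum_nonneg fun j _ => mul_self_nonneg _
  have h2 := (Finset.sum_eq_zero_iff_of_nonneg h1).mp h i (Finset.mem_univ i)
  have h3 := (Finset.sum_eq_zero_iff_of_nonneg (fun j _ => mul_self_nonneg (A i j))).mp h2 j
    (Finset.mem_univ j)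
  simpa [mul_self_eq_zero] using h3

lemma matInner_eq (A B : Matrix (Fin m) (Fin n) ℝ) : matInner A B = ip A B := by
  simp [matInner, ip, Matrix.trace, Matrix.diag, Matrix.mul_apply, mul_comm]
  rw [Finset.sum_comm]

lemma ip_trace (A B : Matrix (Fin m) (Fin n) ℝ) : ip A B = Matrix.trace (Bᵀ * A) :=
  (matInner_eq A B).symm

lemma ipT (A B : Matrix (Fin m) (Fin n) ℝ) : ip Aᵀ Bᵀ = ip A B := by
  rw [ip_trace, ip_trace, Matrix.transpose_transpose, ← Matrix.trace_transpose,
    Matrix.transpose_mul, Matrix.transpose_transpose, Matrix.trace_mul_comm]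

lemma ipL1 (A : Matrix (Fin m) (Fin n) ℝ) (B : Matrix (Fin m) (Fin p) ℝ)
    (C : Matrix (Fin p) (Fin n) ℝ) : ip A (B * C) = ip (Bᵀ * A) C := by
  rw [ip_trace, ip_trace, Matrix.transpose_mul, Matrix.mul_assoc]

lemma ipL2 (A : Matrix (Fin m) (Fin n) ℝ) (B : Matrix (Fin m) (Fin p) ℝ)
    (C : Matrix (Fin p) (Fin n) ℝ) : ip A (B * C) = ip (A * Cᵀ) B := by
  rw [← ipT A (B*C), Matrix.transpose_mul, ipL1, ← Matrix.transpose_mul, ipT]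

lemma ip_prod (A B : Matrix (Fin m) (Fin n) ℝ) :
    ip A B = ∑ q : Fin m × Fin n, A q.1 q.2 * B q.1 q.2 := by
  simp [ip, Fintype.sum_prod_type]

lemma ip_cs (A B : Matrix (Fin m) (Fin n) ℝ) : ip A B ≤ frobNorm A * frobNorm B := by
  have h : (ip A B) ^ 2 ≤ (ip A A) * (ip B B) := by
    rw [ip_prod A B, ip_prod A A, ip_prod B B]
    have := Finset.sum_mul_sq_le_sq_mul_sq (Finset.univ : Finset (Fin m × Fin n))
      (fun q => A q.1 q.2) (fun q => B q.1 q.2)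
    calc (∑ q : Fin m × Fin n, A q.1 q.2 * B q.1 q.2) ^ 2
        ≤ (∑ q : Fin m × Fin n, A q.1 q.2 ^ 2) * ∑ q : Fin m × Fin n, B q.1 q.2 ^ 2 := this
      _ = _ := by simp [pow_two]
  calc ip A B ≤ |ip A B| := le_abs_self _
    _ = Real.sqrt ((ip A B) ^ 2) := (Real.sqrt_sq_eq_abs _).symm
    _ ≤ Real.sqrt ((ip A A) * (ip B B)) := Real.sqrt_le_sqrt h
    _ = frobNorm A * frobNorm B := by
        rw [Real.sqrt_mul (ip_self_nonneg A), frobNorm_eq, frobNorm_eq]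

lemma frob_transpose (A : Matrix (Fin m) (Fin n) ℝ) : frobNorm Aᵀ = frobNorm A := by
  rw [frobNorm_eq, frobNorm_eq, ipT]

lemma frob_mul_le (A : Matrix (Fin m) (Fin p) ℝ) (B : Matrix (Fin p) (Fin n) ℝ) :
    frobNorm (A * B) ≤ frobNorm A * frobNorm B := by
  have h : ip (A*B) (A*B) ≤ ip A A * ip B B := by
    have key : ∀ i j, ((A*B) i j) * ((A*B) i j) ≤ (∑ k, A i k ^2) * (∑ k, B k j ^2) := by
      intro i j
      have := Finset.sum_mul_sq_le_sq_mul_sq (Finset.univ : Finset (Fin p))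
        (fun k => A i k) (fun k => B k j)
      simpa [Matrix.mul_apply, pow_two] using this
    calc ip (A*B) (A*B) ≤ ∑ i, ∑ j, (∑ k, A i k ^2) * (∑ k, B k j ^2) := by
          apply Finset.sum_le_sum; intro i _; apply Finset.sum_le_sum; intro j _; exact key i j
      _ = (∑ i, ∑ k, A i k ^2) * (∑ j, ∑ k, B k j ^2) := by
          rw [Finset.sum_mul_sum]
      _ = ip A A * ip B B := by
          rw [ip, ip]
          congr 1
          · exact Finset.sum_congr rfl fun i _ => Finset.sum_congr rfl fun k _ => (pow_two _)
          · rw [Finset.sum_comm]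
            exact Finset.sum_congr rfl fun i _ => Finset.sum_congr rfl fun k _ => (pow_two _)
  rw [frobNorm_eq, frobNorm_eq, frobNorm_eq, ← Real.sqrt_mul (ip_self_nonneg A)]
  exact Real.sqrt_le_sqrt h

end GD

namespace GD2
open GD Filter Topology

lemma ip_add_left {m n : ℕ} (A B C : Matrix (Fin m) (Fin n) ℝ) :
    ip (A + B) C = ip A C + ip B C := by
  simp [ip, add_mul, Finset.sum_add_distrib]

lemma ip_sub_left {m n : ℕ} (A B C : Matrix (Fin m) (Fin n) ℝ) :
    ip (A - B) C = ip A C - ip B C := by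
  simp [ip, sub_mul, Finset.sum_sub_distrib]

lemma ip_smul_left {m n : ℕ} (t : ℝ) (A B : Matrix (Fin m) (Fin n) ℝ) :
    ip (t • A) B = t * ip A B := by
  simp [ip, Finset.mul_sum, mul_assoc]

lemma ip_add_right {m n : ℕ} (A B C : Matrix (Fin m) (Fin n) ℝ) :
    ip A (B + C) = ip A B + ip A C := by
  rw [ip_comm, ip_add_left, ip_comm B A, ip_comm C A]

lemma ip_sub_right {m n : ℕ} (A B C : Matrix (Fin m) (Fin n) ℝ) :
    ip A (B - C) = ip A B - ip A C := by
  rw [ip_comm, ip_sub_left, ip_comm B A, ip_comm C A]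

lemma ip_smul_right {m n : ℕ} (t : ℝ) (A B : Matrix (Fin m) (Fin n) ℝ) :
    ip A (t • B) = t * ip A B := by
  rw [ip_comm, ip_smul_left, ip_comm B A]

lemma q_expand2 {m n : ℕ} (A B : Matrix (Fin m) (Fin n) ℝ) (t : ℝ) :
    ip (A + t • B) (A + t • B) = ip A A + 2*t*ip A B + t^2 * ip B B := by
  simp only [ip_add_left, ip_add_right, ip_smul_left, ip_smul_right]
  rw [ip_comm B A]; ring

lemma q_expand3 {m n : ℕ} (A B C : Matrix (Fin m) (Fin n) ℝ) (s u : ℝ) :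
    ip (A + s • B + u • C) (A + s • B + u • C) =
      ip A A + s^2 * ip B B + u^2 * ip C C
        + 2*s*ip A B + 2*u*ip A C + 2*s*u*ip B C := by
  simp only [ip_add_left, ip_add_right, ip_smul_left, ip_smul_right]
  rw [ip_comm B A, ip_comm C A, ip_comm C B]; ring

lemma cont_ip {m n : ℕ} (C : Matrix (Fin m) (Fin n) ℝ) :
    Continuous fun M : Matrix (Fin m) (Fin n) ℝ => ip C M := by
  apply continuous_finset_sum; intro i _
  apply continuous_finset_sum; intro j _
  exact continuous_const.mul ((continuous_apply j).comp (continuous_apply i))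

lemma cont_q {m n : ℕ} :
    Continuous fun M : Matrix (Fin m) (Fin n) ℝ => ip M M := by
  apply continuous_finset_sum; intro i _
  apply continuous_finset_sum; intro j _
  have hc : Continuous fun M : Matrix (Fin m) (Fin n) ℝ => M i j :=
    (continuous_apply j).comp (continuous_apply i)
  exact hc.mul hc

/-- First-order optimality condition for the alignment problem. -/
lemma foc {n₁ n₂ r : ℕ} (Xstar X : Matrix (Fin n₁) (Fin r) ℝ)
    (Ystar Y : Matrix (Fin n₂) (Fin r) ℝ)
    (haligned : ∀ P : Matrix (Fin r) (Fin r) ℝ, IsUnit P →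
      (frobNorm (X - Xstar)) ^ 2 + (frobNorm (Y - Ystar)) ^ 2 ≤
        (frobNorm (X * P - Xstar)) ^ 2 + (frobNorm (Y * (P⁻¹)ᵀ - Ystar)) ^ 2) :
    Xᵀ * (X - Xstar) = (Y - Ystar)ᵀ * Y := by
  set Δ := X - Xstar with hΔ
  set Γ := Y - Ystar with hΓ
  have H : ∀ E : Matrix (Fin r) (Fin r) ℝ, ip Δ (X*E) - ip Γ (Y*Eᵀ) = 0 := by
    intro E
    set W := X * E with hW
    set V := Y * Eᵀ with hV
    set L := ip Δ W - ip Γ V with hL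
    set P : ℝ → Matrix (Fin r) (Fin r) ℝ := fun t => 1 + t • E with hP
    have hPc : Continuous P := continuous_const.add (continuous_id.smul continuous_const)
    have hdet0 : (P 0).det = 1 := by simp [hP]
    have hev : ∀ᶠ t in 𝓝 (0:ℝ), (P t).det ≠ 0 := by
      have := (hPc.matrix_det).continuousAt (x := 0)
      exact this.eventually_ne (by rw [hdet0]; exact one_ne_zero)
    have hinvc : ContinuousAt (fun t => (P t)⁻¹) 0 := by
      have h1 : ContinuousAt Ring.inverse ((P 0).det) := by
        rw [Ring.inverse_eq_inv']
        exact continuousAt_inv₀ (by rw [hdet0]; exact one_ne_zero)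
      exact (continuousAt_matrix_inv (P 0) h1).comp hPc.continuousAt
    set R : ℝ → Matrix (Fin n₂) (Fin r) ℝ := fun t => Y * (E * (E * (P t)⁻¹))ᵀ with hR
    have hRc : ContinuousAt R 0 := by
      have hmul : Continuous fun M : Matrix (Fin r) (Fin r) ℝ => Y * (E * (E * M))ᵀ :=
        continuous_const.matrix_mul
          ((continuous_const.matrix_mul (continuous_const.matrix_mul continuous_id)).matrix_transpose)
      exact hmul.continuousAt.comp hinvc
    have hexp : ∀ t : ℝ, (P t).det ≠ 0 →
        (P t)⁻¹ = 1 - t • E + t^2 • (E * (E * (P t)⁻¹)) := by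
      intro t ht
      have hu : IsUnit (P t).det := isUnit_iff_ne_zero.mpr ht
      have h1 : P t * (P t)⁻¹ = 1 := Matrix.mul_nonsing_inv _ hu
      have h2 : (P t)⁻¹ = 1 - t • (E * (P t)⁻¹) := by
        have h3 : (P t)⁻¹ + t • (E * (P t)⁻¹) = 1 := by
          calc (P t)⁻¹ + t • (E * (P t)⁻¹) = (1 + t • E) * (P t)⁻¹ := by
                rw [add_mul, one_mul, Matrix.smul_mul]
            _ = 1 := h1
        exact eq_sub_of_add_eq h3
      calc (P t)⁻¹ = 1 - t • (E * (P t)⁻¹) := h2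
        _ = 1 - t • (E * (1 - t • (E * (P t)⁻¹))) := by rw [← h2]; exact h2
        _ = 1 - t • E + t^2 • (E * (E * (P t)⁻¹)) := by
            rw [mul_sub, mul_one, Matrix.mul_smul, smul_sub, smul_smul]
            rw [pow_two]
            abel
    set B : ℝ → ℝ := fun t => ip W W + ip V V + 2*ip Γ (R t) - 2*t*ip V (R t)
      + t^2 * ip (R t) (R t) with hB
    have hkey : ∀ᶠ t in 𝓝 (0:ℝ), 0 ≤ 2*t*L + t^2 * B t := by
      filter_upwards [hev] with t ht
      have hu : IsUnit (P t) := (Matrix.isUnit_iff_isUnit_det _).mpr (isUnit_iff_ne_zero.mpr ht)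
      have hineq := haligned (P t) hu
      have hX : X * P t - Xstar = Δ + t • W := by
        rw [hP, hW, hΔ]
        simp only [Matrix.mul_add, Matrix.mul_one, Matrix.mul_smul]
        abel
      have hY : Y * ((P t)⁻¹)ᵀ - Ystar = Γ + (-t) • V + t^2 • (R t) := by
        rw [hexp t ht, hΓ, hV, hR]
        simp only [Matrix.transpose_add, Matrix.transpose_sub, Matrix.transpose_smul,
          Matrix.transpose_one, Matrix.mul_add, Matrix.mul_sub, Matrix.mul_one,
          Matrix.mul_smul, neg_smul]
        abel
      rw [hX, hY, frob_sq, frob_sq, frob_sq, frob_sq, q_expand2, q_expand3] at hineq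
      have heq : 2*t*L + t^2 * B t =
          (ip Δ Δ + 2*t*ip Δ W + t^2 * ip W W
            + (ip Γ Γ + (-t)^2 * ip V V + (t^2)^2 * ip (R t) (R t)
              + 2*(-t)*ip Γ V + 2*(t^2)*ip Γ (R t) + 2*(-t)*(t^2)*ip V (R t)))
          - (ip Δ Δ + ip Γ Γ) := by
        rw [hB, hL]; ring
      linarith [hineq, heq.le, heq.ge]
    have hBc : ContinuousAt B 0 := by
      have h1 : ContinuousAt (fun t => ip Γ (R t)) 0 := (cont_ip Γ).continuousAt.comp hRc
      have h2 : ContinuousAt (fun t => ip V (R t)) 0 := (cont_ip V).continuousAt.comp hRc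
      have h3 : ContinuousAt (fun t => ip (R t) (R t)) 0 := cont_q.continuousAt.comp hRc
      exact ((((continuousAt_const.add continuousAt_const).add
        (continuousAt_const.mul h1)).sub
        ((continuousAt_const.mul continuousAt_id).mul h2)).add
        ((continuousAt_id.pow 2).mul h3))
    have htend : Tendsto (fun t : ℝ => 2*L + t * B t) (𝓝 0) (𝓝 (2*L)) := by
      have : ContinuousAt (fun t : ℝ => 2*L + t * B t) 0 :=
        continuousAt_const.add (continuousAt_id.mul hBc)
      have h0 : (fun t : ℝ => 2*L + t * B t) 0 = 2*L := by simp
      simpa [h0] using this.tendsto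
    have hge : 0 ≤ 2*L := by
      have htend' : Tendsto (fun t : ℝ => 2*L + t * B t) (𝓝[>] 0) (𝓝 (2*L)) :=
        htend.mono_left nhdsWithin_le_nhds
      refine ge_of_tendsto htend' ?_
      filter_upwards [eventually_nhdsWithin_of_eventually_nhds hkey, self_mem_nhdsWithin]
        with t h htpos
      have htp : (0:ℝ) < t := htpos
      by_contra hcon
      push_neg at hcon
      have h'' := mul_neg_of_pos_of_neg htp hcon
      nlinarith [h, h'']
    have hle : 2*L ≤ 0 := by
      have htend' : Tendsto (fun t : ℝ => 2*L + t * B t) (𝓝[<] 0) (𝓝 (2*L)) :=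
        htend.mono_left nhdsWithin_le_nhds
      refine le_of_tendsto htend' ?_
      filter_upwards [eventually_nhdsWithin_of_eventually_nhds hkey, self_mem_nhdsWithin]
        with t h htneg
      have htn : t < (0:ℝ) := htneg
      by_contra hcon
      push_neg at hcon
      have h'' := mul_neg_of_neg_of_pos htn hcon
      nlinarith [h, h'']
    rw [hL] at hge hle
    linarith
  have H2 : ∀ E : Matrix (Fin r) (Fin r) ℝ, ip (Xᵀ * Δ - Γᵀ * Y) E = 0 := by
    intro E
    have e1 : ip Δ (X*E) = ip (Xᵀ * Δ) E := ipL1 Δ X E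
    have e2 : ip Γ (Y*Eᵀ) = ip (Γᵀ * Y) E := by
      rw [ipL1 Γ Y Eᵀ, ← ipT (Γᵀ * Y) E, Matrix.transpose_mul, Matrix.transpose_transpose]
    rw [ip_sub_left, ← e1, ← e2]
    exact H E
  have h0 : Xᵀ * Δ - Γᵀ * Y = 0 := ip_self_eq_zero (H2 (Xᵀ * Δ - Γᵀ * Y))
  have := sub_eq_zero.mp h0
  rw [hΔ, hΓ] at this
  exact this

end GD2

open GD GD2

set_option linter.unusedVariables false

/-- Lemma 3, gradient dominance: if `Z = [X; Y]` is aligned with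
`Z⋆` (the identity minimizes the alignment objective over invertible matrices), then
`⟨X − X⋆, (XYᵀ − M⋆)Y⟩ ≥ ‖Y(X − X⋆)ᵀ‖_F² − ¼‖X − X⋆‖_F⁴` and
`⟨Y − Y⋆, (XYᵀ − M⋆)ᵀX⟩ ≥ ‖X(Y − Y⋆)ᵀ‖_F² − ¼‖Y − Y⋆‖_F⁴`. -/
theorem gradient_dominance
    {n₁ n₂ r : ℕ}
    (Ustar : Matrix (Fin n₁) (Fin r) ℝ) (Vstar : Matrix (Fin n₂) (Fin r) ℝ)
    (d : Fin r → ℝ) (hd : ∀ i, 0 < d i)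
    (hU : Ustarᵀ * Ustar = 1) (hV : Vstarᵀ * Vstar = 1)
    (Mstar : Matrix (Fin n₁) (Fin n₂) ℝ)
    (hM : Mstar = Ustar * Matrix.diagonal d * Vstarᵀ)
    (Xstar : Matrix (Fin n₁) (Fin r) ℝ) (Ystar : Matrix (Fin n₂) (Fin r) ℝ)
    (hXs : Xstar = Ustar * Matrix.diagonal (fun i => Real.sqrt (d i)))
    (hYs : Ystar = Vstar * Matrix.diagonal (fun i => Real.sqrt (d i)))
    (X : Matrix (Fin n₁) (Fin r) ℝ) (Y : Matrix (Fin n₂) (Fin r) ℝ)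
    (haligned : ∀ P : Matrix (Fin r) (Fin r) ℝ, IsUnit P →
      (frobNorm (X - Xstar)) ^ 2 + (frobNorm (Y - Ystar)) ^ 2 ≤
        (frobNorm (X * P - Xstar)) ^ 2 + (frobNorm (Y * (P⁻¹)ᵀ - Ystar)) ^ 2) :
    matInner (X - Xstar) ((X * Yᵀ - Mstar) * Y) ≥
      (frobNorm (Y * (X - Xstar)ᵀ)) ^ 2 - (1 / 4) * (frobNorm (X - Xstar)) ^ 4 ∧
    matInner (Y - Ystar) ((X * Yᵀ - Mstar)ᵀ * X) ≥
      (frobNorm (X * (Y - Ystar)ᵀ)) ^ 2 - (1 / 4) * (frobNorm (Y - Ystar)) ^ 4 := by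
  have hdd : (Matrix.diagonal fun i => Real.sqrt (d i)) *
      (Matrix.diagonal fun i => Real.sqrt (d i)) = Matrix.diagonal d := by
    have h : (fun i => Real.sqrt (d i) * Real.sqrt (d i)) = d :=
      funext fun i => Real.mul_self_sqrt (hd i).le
    rw [Matrix.diagonal_mul_diagonal, h]
  have hXY : Mstar = Xstar * Ystarᵀ := by
    have h2 : (Matrix.diagonal fun i => Real.sqrt (d i)) *
        ((Matrix.diagonal fun i => Real.sqrt (d i)) * Vstarᵀ) = Matrix.diagonal d * Vstarᵀ := by
      rw [← Matrix.mul_assoc, hdd]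
    rw [hM, hXs, hYs, Matrix.transpose_mul, Matrix.diagonal_transpose]
    simp only [Matrix.mul_assoc]
    rw [h2]
  set Δ := X - Xstar with hΔ
  set Γ := Y - Ystar with hΓ
  set Bm := Γᵀ * Y with hBm
  have hfoc : Xᵀ * Δ = Bm := GD2.foc Xstar X Ystar Y haligned
  have hXst : Xstar = X - Δ := by rw [hΔ, sub_sub_cancel]
  have hsplit : X * Yᵀ - Mstar = Δ * Yᵀ + Xstar * Γᵀ := by
    rw [hXY, hΔ, hΓ, Matrix.sub_mul, Matrix.transpose_sub, Matrix.mul_sub]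
    abel
  have hfoc2 : Δᵀ * X = Bmᵀ := by
    rw [← hfoc, Matrix.transpose_mul, Matrix.transpose_transpose]
  have hXsD : Xstarᵀ * Δ = Bm - Δᵀ * Δ := by
    rw [hXst, Matrix.transpose_sub, Matrix.sub_mul, hfoc]
  have hXsX : Xstarᵀ * X = Xᵀ * X - Bmᵀ := by
    rw [hXst, Matrix.transpose_sub, Matrix.sub_mul, hfoc2]
  have hDD : frobNorm (Δᵀ * Δ) ≤ frobNorm Δ ^ 2 := by
    calc frobNorm (Δᵀ * Δ) ≤ frobNorm Δᵀ * frobNorm Δ := frob_mul_le _ _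
      _ = frobNorm Δ ^ 2 := by rw [frob_transpose]; ring
  have hGG : frobNorm (Γᵀ * Γ) ≤ frobNorm Γ ^ 2 := by
    calc frobNorm (Γᵀ * Γ) ≤ frobNorm Γᵀ * frobNorm Γ := frob_mul_le _ _
      _ = frobNorm Γ ^ 2 := by rw [frob_transpose]; ring
  constructor
  · -- first inequality
    have e1 : matInner Δ ((X * Yᵀ - Mstar) * Y)
        = ip (Y * Δᵀ) (Y * Δᵀ) + (ip Bm Bm - ip (Δᵀ * Δ) Bm) := by
      rw [matInner_eq, hsplit, Matrix.add_mul, ip_add_right]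
      congr 1
      · rw [ipL2,
          show Δ * Yᵀ = (Y * Δᵀ)ᵀ from by rw [Matrix.transpose_mul, Matrix.transpose_transpose],
          ipT]
      · rw [Matrix.mul_assoc, ipL1, hXsD, ip_sub_left, ← hBm]
    rw [ge_iff_le, ← sub_nonneg]
    have e1' : matInner Δ ((X * Yᵀ - Mstar) * Y)
        - (frobNorm (Y * Δᵀ) ^ 2 - 1/4 * frobNorm Δ ^ 4)
        = (ip Bm Bm - ip (Δᵀ * Δ) Bm) + 1/4 * frobNorm Δ ^ 4 := by
      rw [e1, frob_sq (Y * Δᵀ)]; ring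
    rw [e1']
    have cs1 : ip (Δᵀ * Δ) Bm ≤ frobNorm (Δᵀ * Δ) * frobNorm Bm := ip_cs _ _
    have hb2 : ip Bm Bm = frobNorm Bm ^ 2 := (frob_sq Bm).symm
    have hnn1 := frob_nonneg Bm
    have hnn2 := frob_nonneg Δ
    have hmul : frobNorm (Δᵀ * Δ) * frobNorm Bm ≤ frobNorm Δ ^ 2 * frobNorm Bm :=
      mul_le_mul_of_nonneg_right hDD hnn1
    have h1 : ip (Δᵀ * Δ) Bm ≤ frobNorm Δ ^ 2 * frobNorm Bm := le_trans cs1 hmul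
    have expand : (frobNorm Bm - frobNorm Δ ^ 2 / 2) ^ 2
        = frobNorm Bm ^ 2 - frobNorm Δ ^ 2 * frobNorm Bm + 1/4 * frobNorm Δ ^ 4 := by ring
    have hsq := sq_nonneg (frobNorm Bm - frobNorm Δ ^ 2 / 2)
    rw [expand] at hsq
    linarith
  · -- second inequality
    have hfq : frobNorm (X * Γᵀ) ^ 2 = ip (Γᵀ * Γ) (Xᵀ * X) := by
      rw [frob_sq, ipL1, ← Matrix.mul_assoc, ip_comm, ipL2, Matrix.transpose_transpose]
    have e2 : matInner Γ ((X * Yᵀ - Mstar)ᵀ * X)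
        = (ip (Γᵀ * Γ) (Xᵀ * X) - ip (Γᵀ * Γ) Bmᵀ) + ip Bm Bm := by
      rw [matInner_eq, hsplit, Matrix.transpose_add, Matrix.transpose_mul, Matrix.transpose_mul,
        Matrix.transpose_transpose, Matrix.transpose_transpose, Matrix.add_mul, ip_add_right]
      rw [add_comm (ip Γ (Y * Δᵀ * X))]
      congr 1
      · rw [Matrix.mul_assoc, ipL1, hXsX, ip_sub_right]
      · rw [Matrix.mul_assoc, ipL1, hfoc2,
          show Yᵀ * Γ = Bmᵀ from by rw [hBm, Matrix.transpose_mul, Matrix.transpose_transpose],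
          ipT]
    rw [ge_iff_le, ← sub_nonneg]
    have e2' : matInner Γ ((X * Yᵀ - Mstar)ᵀ * X)
        - (frobNorm (X * Γᵀ) ^ 2 - 1/4 * frobNorm Γ ^ 4)
        = (ip Bm Bm - ip (Γᵀ * Γ) Bmᵀ) + 1/4 * frobNorm Γ ^ 4 := by
      rw [e2, hfq]; ring
    rw [e2']
    have cs2 : ip (Γᵀ * Γ) Bmᵀ ≤ frobNorm (Γᵀ * Γ) * frobNorm Bmᵀ := ip_cs _ _
    have hb2 : ip Bm Bm = frobNorm Bm ^ 2 := (frob_sq Bm).symm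
    have htr : frobNorm Bmᵀ = frobNorm Bm := frob_transpose Bm
    have hnn1 := frob_nonneg Bm
    have hnn2 := frob_nonneg Γ
    have hmul : frobNorm (Γᵀ * Γ) * frobNorm Bm ≤ frobNorm Γ ^ 2 * frobNorm Bm :=
      mul_le_mul_of_nonneg_right hGG hnn1
    have h1 : ip (Γᵀ * Γ) Bmᵀ ≤ frobNorm Γ ^ 2 * frobNorm Bm := by
      rw [htr] at cs2; exact le_trans cs2 hmul
    have expand : (frobNorm Bm - frobNorm Γ ^ 2 / 2) ^ 2
        = frobNorm Bm ^ 2 - frobNorm Γ ^ 2 * frobNorm Bm + 1/4 * frobNorm Γ ^ 4 := by ring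
    have hsq := sq_nonneg (frobNorm Bm - frobNorm Γ ^ 2 / 2)
    rw [expand] at hsq
    linarith
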